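/- Let α ≥ 3 be a cardinal, let θ be an infinite cardinal, and let λ be a cardinal with cf(2^θ) ≤ λ < 2^θ and θ < λ. Then there is no family F of at most 2^θ graphs, each of cardinality λ, such that every K_α-free graph of cardinality λ embeds as an induced subgraph into some member of F; in particular, the complexity of the class of K_α-free graphs of cardinality λ is greater than 2^θ. -/

import Mathlib

universe u

open Cardinal

/-- `G` is `K_α`-free: there is no injective map from a type of cardinality `α` into
the vertices of `G` whose images are pairwise adjacent. -/
def KCliqueFree (α : Cardinal.{u}) {V : Type u} (G : SimpleGraph V) : Prop :=
  ¬ ∃ (ι : Type u) (f : ι → V), #ι = α ∧ Function.Injective f ∧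
      ∀ i j : ι, i ≠ j → G.Adj (f i) (f j)

/-- The bipartite graph on `P ⊕ L` where `a : L` is joined to its "neighborhood"
`N a ⊆ P`. -/
def BipGraph {P L : Type u} (N : L → Set P) : SimpleGraph (P ⊕ L) where
  Adj x y := (∃ p a, x = Sum.inl p ∧ y = Sum.inr a ∧ p ∈ N a) ∨
             (∃ p a, x = Sum.inr a ∧ y = Sum.inl p ∧ p ∈ N a)
  symm := by
    constructor
    rintro x y (⟨p, a, hx, hy, h⟩ | ⟨p, a, hx, hy, h⟩)
    · exact Or.inr ⟨p, a, hy, hx, h⟩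
    · exact Or.inl ⟨p, a, hy, hx, h⟩
  loopless := by
    constructor
    rintro x (⟨p, a, h1, h2, _⟩ | ⟨p, a, h1, h2, _⟩) <;> subst h1 <;> simp at h2

lemma bipGraph_adj_inr_inl {P L : Type u} (N : L → Set P) (a : L) (p : P) :
    (BipGraph N).Adj (Sum.inr a) (Sum.inl p) ↔ p ∈ N a := by
  constructor
  · rintro (⟨q, b, h1, h2, h⟩ | ⟨q, b, h1, h2, h⟩)
    · simp at h1
    · obtain ⟨rfl⟩ := Sum.inr.inj h1
      obtain ⟨rfl⟩ := Sum.inl.inj h2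
      exact h
  · intro h
    exact Or.inr ⟨p, a, rfl, rfl, h⟩

lemma bipGraph_isLeft {P L : Type u} (N : L → Set P) {x y : P ⊕ L}
    (h : (BipGraph N).Adj x y) : x.isLeft = !y.isLeft := by
  rcases h with ⟨p, a, hx, hy, _⟩ | ⟨p, a, hx, hy, _⟩ <;> subst hx <;> subst hy <;> simp

/-- The key diagonalization: given at most `#(Set Θ)` many "trace families", each of
size at most `lam`, where `cf(#(Set Θ)) ≤ lam < #(Set Θ)`, there is a family `S` of
at most `lam` subsets of `Θ` not contained in any of them. -/
lemma diag {Θ : Type u} {lam : Cardinal.{u}} {J : Type u}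
    (hκinf : ℵ₀ ≤ #(Set Θ)) (hcf : (#(Set Θ)).ord.cof ≤ lam) (hlam : lam < #(Set Θ))
    (hJ : #J ≤ #(Set Θ)) (T : J → Set (Set Θ)) (hT : ∀ j, #(T j) ≤ lam) :
    ∃ S : Set (Set Θ), #S ≤ lam ∧ ∀ j, ¬ S ⊆ T j := by
  set κ := #(Set Θ) with hκ
  have hO : #κ.ord.ToType = κ := by rw [Cardinal.mk_toType, Cardinal.card_ord]
  obtain ⟨idx⟩ : Nonempty (J ↪ κ.ord.ToType) := by
    rw [← Cardinal.le_def, hO]; exact hJ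
  haveI : IsWellOrder κ.ord.ToType (· < ·) := isWellOrder_lt
  obtain ⟨C, hCu, hCc⟩ := Order.exists_cof_eq κ.ord.ToType
  rw [Ordinal.cof_toType] at hCc
  -- the union of traces indexed below `c`
  set B : κ.ord.ToType → Set (Set Θ) := fun c => ⋃ j : {j // idx j ≤ c}, T j.val with hB
  have hBcard : ∀ c, #(B c) < κ := by
    intro c
    have h1 : #{j // idx j ≤ c} ≤ #(Set.Iic c) := by
      rw [Cardinal.le_def]
      exact ⟨⟨fun j => ⟨idx j.1, j.2⟩, fun j k h =>
        Subtype.ext (idx.injective (congrArg Subtype.val h))⟩⟩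
    have h2 : #(Set.Iic c) < κ := by
      have : Set.Iic c = insert c (Set.Iio c) := by
        ext x; simp [le_iff_lt_or_eq, or_comm]
      rw [this]
      refine lt_of_le_of_lt Cardinal.mk_insert_le ?_
      exact Cardinal.add_lt_of_lt hκinf (Cardinal.mk_Iio_ord_toType c)
        (one_lt_aleph0.trans_le hκinf)
    calc #(B c) ≤ #{j // idx j ≤ c} * ⨆ j : {j // idx j ≤ c}, #(T j.val) :=
          Cardinal.mk_iUnion_le _
      _ ≤ #{j // idx j ≤ c} * lam := by
          refine mul_le_mul' le_rfl (ciSup_le' fun j => hT j.val)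
      _ < κ := Cardinal.mul_lt_of_lt hκinf (h1.trans_lt h2) hlam
  have hpick : ∀ c, ∃ x, x ∉ B c := by
    intro c
    by_contra h
    push_neg at h
    have : Set.univ ⊆ B c := fun x _ => h x
    have : κ ≤ #(B c) := by
      calc κ = #(Set.univ : Set (Set Θ)) := by rw [Cardinal.mk_univ]
        _ ≤ #(B c) := Cardinal.mk_le_mk_of_subset this
    exact absurd this (not_le.2 (hBcard c))
  choose s hs using hpick
  refine ⟨s '' C, ?_, ?_⟩
  · calc #(s '' C) ≤ #C := Cardinal.mk_image_le
      _ = κ.ord.cof := hCc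
      _ ≤ lam := hcf
  · intro j hsub
    obtain ⟨c, hcC, hc⟩ := hCu (idx j)
    have hle : idx j ≤ c := hc
    have hTB : T j ⊆ B c := fun x hx => Set.mem_iUnion.2 ⟨⟨j, hle⟩, hx⟩
    exact hs c (hTB (hsub (Set.mem_image_of_mem s hcC)))

/-- For a cardinal `α ≥ 3`, an infinite `θ`, and `λ` with `cf(2^θ) ≤ λ < 2^θ` and
`θ < λ`, there is no family of at most `2^θ` graphs, each of cardinality `λ`, embedding
(as induced subgraphs) all `K_α`-free graphs of cardinality `λ`; i.e. the complexity of
the class of `K_α`-free graphs in power `λ` exceeds `2^θ`. -/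
theorem stmt7 (α θ lam : Cardinal.{u}) (hα : 3 ≤ α) (hθ : ℵ₀ ≤ θ)
    (hcf : ((2 : Cardinal.{u}) ^ θ).ord.cof ≤ lam) (hlt : lam < 2 ^ θ) (hθlam : θ < lam) :
    ¬ ∃ (ι : Type u) (V : ι → Type u) (G : ∀ i, SimpleGraph (V i)),
        #ι ≤ 2 ^ θ ∧ (∀ i, #(V i) = lam) ∧
        ∀ (W : Type u) (H : SimpleGraph W), #W = lam → KCliqueFree α H →
          ∃ i, Nonempty (H ↪g G i) := by
  classical
  rintro ⟨ι, V, G, hι, hV, hemb⟩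
  set Θ := θ.out with hΘdef
  have hΘ : #Θ = θ := Cardinal.mk_out θ
  have hSetΘ : #(Set Θ) = 2 ^ θ := by rw [Cardinal.mk_set, hΘ]
  have hκinf : ℵ₀ ≤ (2 : Cardinal.{u}) ^ θ := hθ.trans (Cardinal.cantor θ).le
  have hlaminf : ℵ₀ ≤ lam := hθ.trans hθlam.le
  -- index type for traces
  set J := Σ i : ι, (Θ → V i) with hJdef
  have hJ : #J ≤ 2 ^ θ := by
    have harrow : ∀ i : ι, #(Θ → V i) ≤ 2 ^ θ := by
      intro i
      have : #(Θ → V i) = lam ^ θ := by rw [← hV i, ← hΘ, Cardinal.power_def]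
      rw [this]
      calc lam ^ θ ≤ (2 ^ θ) ^ θ := Cardinal.power_le_power_right hlt.le
        _ = 2 ^ (θ * θ) := by rw [Cardinal.power_mul]
        _ = 2 ^ θ := by rw [Cardinal.mul_eq_self hθ]
    calc #J = Cardinal.sum fun i => #(Θ → V i) := Cardinal.mk_sigma _
      _ ≤ Cardinal.sum fun _ : ι => (2 : Cardinal.{u}) ^ θ :=
          Cardinal.sum_le_sum _ _ harrow
      _ = #ι * 2 ^ θ := Cardinal.sum_const' ι _
      _ ≤ 2 ^ θ * 2 ^ θ := mul_le_mul' hι le_rfl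
      _ = 2 ^ (θ + θ) := (Cardinal.power_add 2 θ θ).symm
      _ = 2 ^ θ := by rw [Cardinal.add_eq_self hθ]
  -- the trace families
  set T : J → Set (Set Θ) := fun j =>
    Set.range fun v : V j.1 => {p : Θ | (G j.1).Adj v (j.2 p)} with hTdef
  have hT : ∀ j, #(T j) ≤ lam := fun j => Cardinal.mk_range_le.trans (hV j.1).le
  obtain ⟨S, hScard, hSdef⟩ := diag (hSetΘ ▸ hκinf) (hSetΘ ▸ hcf) (hSetΘ ▸ hlt)
    (hSetΘ ▸ hJ) T hT
  -- build the bipartite graph realizing `S` as neighborhoods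
  set L := lam.out with hLdef
  have hL : #L = lam := Cardinal.mk_out lam
  obtain ⟨e⟩ : Nonempty (↥S ↪ L) := by rw [← Cardinal.le_def, hL]; exact hScard
  set N : L → Set Θ := fun a =>
    if h : ∃ x : ↥S, e x = a then (Classical.choose h).val else ∅ with hNdef
  have hNS : ∀ (A : Set Θ) (hA : A ∈ S), N (e ⟨A, hA⟩) = A := by
    intro A hA
    have hex : ∃ x : ↥S, e x = e ⟨A, hA⟩ := ⟨⟨A, hA⟩, rfl⟩
    have := Classical.choose_spec hex
    have heq : Classical.choose hex = ⟨A, hA⟩ := e.injective this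
    simp only [hNdef, dif_pos hex, heq]
  set H := BipGraph N with hHdef
  -- `H` has `lam` vertices
  have hcardW : #(Θ ⊕ L) = lam := by
    simp only [Cardinal.mk_sum, Cardinal.lift_id, hΘ, hL]
    exact Cardinal.add_eq_right hlaminf hθlam.le
  -- `H` is `K_α`-free
  have hfree : KCliqueFree α H := by
    rintro ⟨ιc, f, hcard, hinj, hadj⟩
    have h3 : (3 : Cardinal.{u}) ≤ #ιc := hcard ▸ hα
    have h3' : #(ULift.{u} (Fin 3)) ≤ #ιc := by simpa using h3
    obtain ⟨g⟩ := (Cardinal.le_def _ _).1 h3'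
    set x : Fin 3 → Θ ⊕ L := fun k => f (g ⟨k⟩) with hxdef
    have hadj' : ∀ k l : Fin 3, k ≠ l → H.Adj (x k) (x l) := by
      intro k l hkl
      exact hadj _ _ fun h => hkl (by injection g.injective h)
    have h01 := bipGraph_isLeft N (hadj' 0 1 (by decide))
    have h02 := bipGraph_isLeft N (hadj' 0 2 (by decide))
    have h12 := bipGraph_isLeft N (hadj' 1 2 (by decide))
    cases hb : (x 2).isLeft <;> rw [hb] at h02 h12 <;> rw [h12] at h01 <;>
      rw [h02] at h01 <;> simp at h01
  -- derive the contradiction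
  obtain ⟨i, ⟨f⟩⟩ := hemb (Θ ⊕ L) H hcardW hfree
  set g : Θ → V i := fun p => f (Sum.inl p) with hgdef
  refine hSdef ⟨i, g⟩ fun A hA => ?_
  refine ⟨f (Sum.inr (e ⟨A, hA⟩)), ?_⟩
  ext p
  simp only [Set.mem_setOf_eq]
  rw [hgdef]
  rw [show (G i).Adj (f (Sum.inr (e ⟨A, hA⟩))) (f (Sum.inl p)) ↔
      H.Adj (Sum.inr (e ⟨A, hA⟩)) (Sum.inl p) from f.map_adj_iff]
  rw [hHdef, bipGraph_adj_inr_inl, hNS A hA]
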